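/- Let Φ be the ℤ-algebra automorphism of the group algebra R[B_n] that is semilinear over the ring automorphism of R given by a ↦ a^{-1}, b ↦ b^{-1}, c ↦ c^{-1} and sends each generator s_i to s_i^{-1}, and let Ψ be the ℤ-algebra anti-automorphism of R[B_n] semilinear over the same ring automorphism of R with Ψ(g) = g^{-1} for every g ∈ B_n. Then, in H_3, Φ(r_1) = a^{-2} r_1 and Ψ(r_1) = −a^{-2} r_1. Consequently, for every n ≥ 3, Φ induces a ℤ-algebra automorphism φ of Q_n, Ψ induces a ℤ-algebra anti-automorphism ψ of Q_n, and φ∘ψ = ψ∘φ is an R-algebra anti-automorphism of Q_n fixing each s_i. -/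

import Mathlib

noncomputable section
open scoped Classical Pointwise

namespace Cubic

/-- The braid relations on `m` generators. -/
def braidRels (m : ℕ) : Set (FreeGroup (Fin m)) :=
  { r | (∃ i j : Fin m, (i : ℕ) + 1 = (j : ℕ) ∧
          r = FreeGroup.of i * FreeGroup.of j * FreeGroup.of i *
              (FreeGroup.of j * FreeGroup.of i * FreeGroup.of j)⁻¹) ∨
        (∃ i j : Fin m, (i : ℕ) + 2 ≤ (j : ℕ) ∧
          r = FreeGroup.of i * FreeGroup.of j * (FreeGroup.of j * FreeGroup.of i)⁻¹) }

/-- The braid group with `m` Artin generators, i.e. the braid group on `m+1` strands. -/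
def BraidGroup (m : ℕ) : Type := PresentedGroup (braidRels m)

instance (m : ℕ) : Group (BraidGroup m) :=
  inferInstanceAs (Group (PresentedGroup (braidRels m)))

/-- The Artin generator with index `i`; this is `s_{i+1}` in the usual numbering. -/
def σ {m : ℕ} (i : Fin m) : BraidGroup m := PresentedGroup.of i

/-- The group algebra of the braid group with `m` Artin generators over `R`. -/
abbrev BA (R : Type) [CommRing R] (m : ℕ) : Type := MonoidAlgebra R (BraidGroup m)

/-- The canonical image of a braid in the group algebra. -/
def ι {R : Type} [CommRing R] {m : ℕ} (g : BraidGroup m) : BA R m :=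
  MonoidAlgebra.of R (BraidGroup m) g

/-- The congruence relation associated to a two-sided ideal. -/
def idRel {A : Type} [Ring A] (I : TwoSidedIdeal A) : A → A → Prop :=
  fun x y => x - y ∈ I

/-- Quotient of a ring by a two-sided ideal. -/
abbrev QuotI {A : Type} [Ring A] (I : TwoSidedIdeal A) : Type := RingQuot (idRel I)

section general
variable (R : Type) [CommRing R]

/-- The cubic element `(s₁-a)(s₁-b)(s₁-c)` in the group algebra of the braid group
on `m+2` strands. -/
def cubicElt (a b c : R) (m : ℕ) : BA R (m+1) :=
  (ι (σ 0) - algebraMap R (BA R (m+1)) a) * (ι (σ 0) - algebraMap R (BA R (m+1)) b) *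
    (ι (σ 0) - algebraMap R (BA R (m+1)) c)

/-- The defining two-sided ideal of the cubic Hecke algebra. -/
def cubicIdeal (a b c : R) (m : ℕ) : TwoSidedIdeal (BA R (m+1)) :=
  TwoSidedIdeal.span {cubicElt R a b c m}

/-- The cubic Hecke algebra `H_{m+2}` on `m+2` strands. -/
abbrev Hecke (a b c : R) (m : ℕ) : Type := QuotI (cubicIdeal R a b c m)

/-- Canonical projection onto the cubic Hecke algebra. -/
def heckeMk (a b c : R) (m : ℕ) : BA R (m+1) →ₐ[R] Hecke R a b c m :=
  RingQuot.mkAlgHom R (idRel (cubicIdeal R a b c m))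

/-- The quadratic element `(s₁-x)(s₁-y)`. -/
def quadElt (x y : R) (m : ℕ) : BA R (m+1) :=
  (ι (σ 0) - algebraMap R (BA R (m+1)) x) * (ι (σ 0) - algebraMap R (BA R (m+1)) y)

/-- The two-sided ideal `J_n(x,y)` generated by the quadratic relation. -/
def J (x y : R) (m : ℕ) : TwoSidedIdeal (BA R (m+1)) :=
  TwoSidedIdeal.span {quadElt R x y m}

/-- The Iwahori–Hecke algebra `H_{m+2}(x,y)` with parameters `x`, `y`. -/
abbrev HeckeQ (x y : R) (m : ℕ) : Type := QuotI (J R x y m)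

/-- Canonical projection onto the quadratic Hecke algebra. -/
def heckeQMk (x y : R) (m : ℕ) : BA R (m+1) →ₐ[R] HeckeQ R x y m :=
  RingQuot.mkAlgHom R (idRel (J R x y m))

/-- The tripled quadratic Hecke algebra `ℋ_{m+2}`. -/
abbrev TripleHecke (a b c : R) (m : ℕ) : Type :=
  QuotI (J R a b m ⊓ J R a c m ⊓ J R b c m)

/-- Canonical projection onto the tripled quadratic Hecke algebra. -/
def tMk (a b c : R) (m : ℕ) : BA R (m+1) →ₐ[R] TripleHecke R a b c m :=
  RingQuot.mkAlgHom R (idRel (J R a b m ⊓ J R a c m ⊓ J R b c m))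

/-- The element `𝐛 = s₂²s₁ - s₁s₂² - s₂s₁² + s₁²s₂`. -/
def bElt (m : ℕ) : BA R (m+1) :=
  ι (σ 1) ^ 2 * ι (σ 0) - ι (σ 0) * ι (σ 1) ^ 2 - ι (σ 1) * ι (σ 0) ^ 2 + ι (σ 0) ^ 2 * ι (σ 1)

/-- The two-sided ideal of the cubic Hecke algebra generated by `𝐛`. -/
def bIdeal (a b c : R) (m : ℕ) : TwoSidedIdeal (Hecke R a b c m) :=
  TwoSidedIdeal.span {heckeMk R a b c m (bElt R m)}

/-- The algebra `𝒦_{m+2} = H_{m+2}(a,b,c)/(𝐛)`. -/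
abbrev KAlg (a b c : R) (m : ℕ) : Type := QuotI (bIdeal R a b c m)

/-- Canonical projection onto `𝒦_{m+2}`. -/
def kMk (a b c : R) (m : ℕ) : BA R (m+1) →ₐ[R] KAlg R a b c m :=
  (RingQuot.mkAlgHom R (idRel (bIdeal R a b c m))).comp (heckeMk R a b c m)

end general

/-- The Laurent polynomial ring `ℤ[a^{±1}, b^{±1}, c^{±1}]`. -/
abbrev LR : Type := AddMonoidAlgebra ℤ (Fin 3 →₀ ℤ)

/-- The Laurent variable with index `i` (so `a`, `b`, `c`). -/
def va (i : Fin 3) : LR := AddMonoidAlgebra.single (Finsupp.single i 1) 1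

/-- The inverse of the Laurent variable with index `i`. -/
def vaInv (i : Fin 3) : LR := AddMonoidAlgebra.single (-(Finsupp.single i 1)) 1

/-- `r • g` as an element of the group algebra over `LR`. -/
def sg {m : ℕ} (g : BraidGroup m) (r : LR) : BA LR m := MonoidAlgebra.single g r

/-- The element `r₁` of the group algebra of the braid group on `m+2` strands. -/
def r1Elt (m : ℕ) : BA LR (m+2) :=
  sg ((σ 0)⁻¹ * σ 1 * σ 0) 1 - sg (σ 0 * σ 1 * (σ 0)⁻¹) 1
  + sg (σ 0 * σ 1) (vaInv 0) - sg (σ 0 * (σ 1)⁻¹) (va 0) - sg ((σ 0)⁻¹ * σ 1) (va 0)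
  + sg ((σ 0)⁻¹ * (σ 1)⁻¹) (va 0 ^ 3) - sg (σ 1 * σ 0) (vaInv 0) + sg (σ 1 * (σ 0)⁻¹) (va 0)
  + sg ((σ 1)⁻¹ * σ 0) (va 0) - sg ((σ 1)⁻¹ * (σ 0)⁻¹) (va 0 ^ 3)
  - sg ((σ 0)⁻¹ * (σ 1)⁻¹ * σ 0) (va 0 ^ 2) + sg (σ 0 * (σ 1)⁻¹ * (σ 0)⁻¹) (va 0 ^ 2)

/-- The cubic Hecke algebra `H_{m+2}` over `ℤ[a^{±1},b^{±1},c^{±1}]`. -/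
abbrev HLR (m : ℕ) : Type := Hecke LR (va 0) (va 1) (va 2) m

/-- Projection onto `H_{m+2}`. -/
def hMk (m : ℕ) : BA LR (m+1) →ₐ[LR] HLR m := heckeMk LR (va 0) (va 1) (va 2) m

/-- Image of a braid in `H_{m+2}`. -/
def hg {m : ℕ} (g : BraidGroup (m+1)) : HLR m := hMk m (ι g)

/-- The two-sided ideal of `H_{m+2}` generated by (the image of) `r₁`. -/
def QIdeal (m : ℕ) : TwoSidedIdeal (HLR (m+1)) :=
  TwoSidedIdeal.span {hMk (m+1) (r1Elt m)}

/-- The maximal cubic quotient `Q_{m+3}`, so `Q₃ = QAlg 0`, `Q₄ = QAlg 1`, `Q₅ = QAlg 2`. -/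
abbrev QAlg (m : ℕ) : Type := QuotI (QIdeal m)

/-- Projection onto `Q_{m+3}`. -/
def qMk (m : ℕ) : BA LR (m+2) →ₐ[LR] QAlg m :=
  (RingQuot.mkAlgHom LR (idRel (QIdeal m))).comp (hMk (m+1))

/-- Image of a braid in `Q_{m+3}`. -/
def qg {m : ℕ} (g : BraidGroup (m+2)) : QAlg m := qMk m (ι g)


/-- The scalar `r` viewed inside the group algebra. -/
def algC {m : ℕ} (r : LR) : BA LR m := algebraMap LR (BA LR m) r

/-- `Φ` is the ℤ-algebra endomorphism of `R[B]` semilinear over `a ↦ a⁻¹, b ↦ b⁻¹, c ↦ c⁻¹`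
sending each Artin generator `sᵢ` to `sᵢ⁻¹`. -/
def IsPhi {m : ℕ} (Φ : BA LR m →+* BA LR m) : Prop :=
  (∀ i : Fin 3, Φ (algC (va i)) = algC (vaInv i)) ∧
  (∀ i : Fin 3, Φ (algC (vaInv i)) = algC (va i)) ∧
  (∀ i : Fin m, Φ (ι (σ i)) = ι ((σ i)⁻¹))

/-- `Ψ` is the ℤ-algebra anti-endomorphism of `R[B]` semilinear over
`a ↦ a⁻¹, b ↦ b⁻¹, c ↦ c⁻¹` with `Ψ(g) = g⁻¹` for every braid `g`. -/
def IsPsi {m : ℕ} (Ψ : BA LR m →+* (BA LR m)ᵐᵒᵖ) : Prop :=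
  (∀ i : Fin 3, Ψ (algC (va i)) = MulOpposite.op (algC (vaInv i))) ∧
  (∀ i : Fin 3, Ψ (algC (vaInv i)) = MulOpposite.op (algC (va i))) ∧
  (∀ g : BraidGroup m, Ψ (ι g) = MulOpposite.op (ι g⁻¹))

section MyAux

open MulOpposite

/-! ### Basic lemmas about `LR` -/

/-- The Laurent monomial `a^k` (variable index 0). -/
def la (k : ℤ) : LR := AddMonoidAlgebra.single (Finsupp.single (0 : Fin 3) k) 1

lemma va_eq_la : va 0 = la 1 := rfl

lemma vaInv_eq_la : vaInv 0 = la (-1) := by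
  simp only [vaInv, la, Finsupp.single_neg]

lemma la_mul (j k : ℤ) : la j * la k = la (j + k) := by
  simp [la, AddMonoidAlgebra.single_mul_single, Finsupp.single_add]

lemma la_zero : la 0 = 1 := by
  simp [la, AddMonoidAlgebra.one_def]

lemma la_pow (k : ℤ) (n : ℕ) : la k ^ n = la (n * k) := by
  induction n with
  | zero => simp [la_zero]
  | succ n ih =>
    rw [pow_succ, ih, la_mul]
    congr 1
    push_cast
    ring

/-! ### Basic lemmas about the group algebra -/

lemma ι_mul {R : Type} [CommRing R] {m : ℕ} (g h : BraidGroup m) :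
    (ι (g * h) : BA R m) = ι g * ι h := by
  simp [ι]

lemma ι_one {R : Type} [CommRing R] {m : ℕ} : (ι (1 : BraidGroup m) : BA R m) = 1 :=
  map_one (MonoidAlgebra.of R (BraidGroup m))

lemma ι_inv_mul {R : Type} [CommRing R] {m : ℕ} (g : BraidGroup m) :
    (ι g⁻¹ : BA R m) * ι g = 1 := by
  rw [← ι_mul, inv_mul_cancel, ι_one]

lemma ι_mul_inv {R : Type} [CommRing R] {m : ℕ} (g : BraidGroup m) :
    (ι g : BA R m) * ι g⁻¹ = 1 := by
  rw [← ι_mul, mul_inv_cancel, ι_one]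

lemma algC_def {m : ℕ} (r : LR) : (algC r : BA LR m) = MonoidAlgebra.single 1 r := by
  simp [algC, MonoidAlgebra.coe_algebraMap]

lemma sg_eq {m : ℕ} (g : BraidGroup m) (r : LR) : sg g r = algC r * ι g := by
  rw [algC_def, sg, ι]
  simp [MonoidAlgebra.single_mul_single]

lemma smul_sg {m : ℕ} (c : LR) (g : BraidGroup m) (r : LR) :
    c • sg g r = sg g (c * r) := MonoidAlgebra.smul_single' c g r

lemma algC_mul {m : ℕ} (r s : LR) : (algC (r * s) : BA LR m) = algC r * algC s :=
  map_mul (algebraMap LR (BA LR m)) r s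

lemma algC_one {m : ℕ} : (algC (1 : LR) : BA LR m) = 1 := map_one (algebraMap _ _)

lemma sg_one {m : ℕ} (g : BraidGroup m) : sg g (1 : LR) = ι g := by
  rw [sg_eq, algC_one, one_mul]

lemma algC_comm {m : ℕ} (r : LR) (x : BA LR m) : x * algC r = algC r * x :=
  (Algebra.commutes r x).symm

end MyAux
/-! ### Extensionality for ring homomorphisms out of `LR` and out of `BA LR m` -/

lemma vaInv_eq (i : Fin 3) :
    vaInv i = AddMonoidAlgebra.single (Finsupp.single i (-1 : ℤ)) 1 := by
  simp [vaInv, Finsupp.single_neg]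

lemma single_single_mul (i : Fin 3) (a b : ℤ) :
    (AddMonoidAlgebra.single (Finsupp.single i (a + b)) (1:ℤ) : LR)
      = AddMonoidAlgebra.single (Finsupp.single i a) 1
        * AddMonoidAlgebra.single (Finsupp.single i b) 1 := by
  simp [AddMonoidAlgebra.single_mul_single, ← Finsupp.single_add]

lemma LR_hom_ext {S : Type*} [Ring S] (f g : LR →+* S)
    (hva : ∀ i, f (va i) = g (va i)) (hvaInv : ∀ i, f (vaInv i) = g (vaInv i)) :
    f = g := by
  have hmono : ∀ (i : Fin 3) (k : ℤ), f (AddMonoidAlgebra.single (Finsupp.single i k) 1)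
      = g (AddMonoidAlgebra.single (Finsupp.single i k) 1) := by
    intro i k
    induction k using Int.induction_on with
    | zero =>
      have : (AddMonoidAlgebra.single (Finsupp.single i (0:ℤ)) (1:ℤ) : LR) = 1 := by
        simp [AddMonoidAlgebra.one_def]
      rw [this, map_one, map_one]
    | succ n ih =>
      rw [single_single_mul i (n:ℤ) 1, map_mul, map_mul, ih]
      have : (AddMonoidAlgebra.single (Finsupp.single i (1:ℤ)) 1 : LR) = va i := rfl
      rw [this, hva]
    | pred n ih =>
      have e : (-(n:ℤ)-1) = (-(n:ℤ)) + (-1) := by ring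
      rw [e, single_single_mul i (-(n:ℤ)) (-1), map_mul, map_mul, ih, ← vaInv_eq, hvaInv]
  have hx : ∀ x : Fin 3 →₀ ℤ, f (AddMonoidAlgebra.single x 1) = g (AddMonoidAlgebra.single x 1) := by
    intro x
    induction x using Finsupp.induction with
    | zero =>
      have : (AddMonoidAlgebra.single (0 : Fin 3 →₀ ℤ) (1:ℤ) : LR) = 1 := by
        simp [AddMonoidAlgebra.one_def]
      rw [this, map_one, map_one]
    | single_add i k y hiy hk ih =>
      have : (AddMonoidAlgebra.single (Finsupp.single i k + y) (1:ℤ) : LR)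
          = AddMonoidAlgebra.single (Finsupp.single i k) 1 * AddMonoidAlgebra.single y 1 := by
        simp [AddMonoidAlgebra.single_mul_single]
      rw [this, map_mul, map_mul, hmono, ih]
  refine RingHom.ext fun r => ?_
  induction r using AddMonoidAlgebra.induction_linear with
  | zero => rw [map_zero, map_zero]
  | add a b ha hb => rw [map_add, map_add, ha, hb]
  | single x n =>
    change f (AddMonoidAlgebra.single x n) = g (AddMonoidAlgebra.single x n)
    have : (AddMonoidAlgebra.single x n : LR) = n • AddMonoidAlgebra.single x 1 := by
      rw [AddMonoidAlgebra.smul_single']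
      simp
    rw [this, map_zsmul, map_zsmul, hx]

lemma BA_algC_ext {m : ℕ} {S : Type*} [Ring S] (f g : BA LR m →+* S)
    (hva : ∀ i, f (algC (va i)) = g (algC (va i)))
    (hvaInv : ∀ i, f (algC (vaInv i)) = g (algC (vaInv i))) :
    ∀ r : LR, f (algC r) = g (algC r) := by
  intro r
  have := LR_hom_ext (f.comp (algebraMap LR (BA LR m))) (g.comp (algebraMap LR (BA LR m)))
    (by simpa [algC] using hva) (by simpa [algC] using hvaInv)
  exact DFunLike.congr_fun this r

lemma BA_hom_ext {m : ℕ} {S : Type*} [Ring S] (f g : BA LR m →+* S)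
    (hva : ∀ i, f (algC (va i)) = g (algC (va i)))
    (hvaInv : ∀ i, f (algC (vaInv i)) = g (algC (vaInv i)))
    (hσ : ∀ i : Fin m, f (ι (σ i)) = g (ι (σ i))) :
    f = g := by
  have halg := BA_algC_ext f g hva hvaInv
  have hgen : ∀ b : BraidGroup m, f (ι b) = g (ι b) := by
    intro b
    have hb : b ∈ Subgroup.closure (Set.range (σ : Fin m → BraidGroup m)) := by
      have : Subgroup.closure (Set.range (σ : Fin m → BraidGroup m)) = ⊤ :=
        PresentedGroup.closure_range_of (braidRels m)
      rw [this]; trivial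
    induction hb using Subgroup.closure_induction with
    | mem x hx => obtain ⟨i, rfl⟩ := hx; exact hσ i
    | one => rw [ι_one, map_one, map_one]
    | mul x y hx hy ihx ihy => rw [ι_mul, map_mul, map_mul, ihx, ihy]
    | inv x hx ih =>
      have h1 : f (ι x⁻¹) * f (ι x) = 1 := by rw [← map_mul, ← ι_mul, inv_mul_cancel, ι_one, map_one]
      have h2 : g (ι x) * g (ι x⁻¹) = 1 := by rw [← map_mul, ← ι_mul, mul_inv_cancel, ι_one, map_one]
      calc f (ι x⁻¹) = f (ι x⁻¹) * (g (ι x) * g (ι x⁻¹)) := by rw [h2, mul_one]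
        _ = (f (ι x⁻¹) * f (ι x)) * g (ι x⁻¹) := by rw [ih, mul_assoc]
        _ = g (ι x⁻¹) := by rw [h1, one_mul]
  refine RingHom.ext fun x => ?_
  induction x using MonoidAlgebra.induction_linear with
  | zero => rw [map_zero, map_zero]
  | add a b ha hb => rw [map_add, map_add, ha, hb]
  | single b r =>
    change f (MonoidAlgebra.single b r) = g (MonoidAlgebra.single b r)
    have : (MonoidAlgebra.single b r : BA LR m) = algC r * ι b := sg_eq b r
    rw [this, map_mul, map_mul, halg, hgen]
/-! ### The relations hold in `BraidGroup`, and the inverting endomorphism -/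

lemma braid_rel_mk {m : ℕ} {r : FreeGroup (Fin m)} (hr : r ∈ braidRels m) :
    (QuotientGroup.mk r : BraidGroup m) = 1 := by
  rw [QuotientGroup.eq_one_iff]
  exact Subgroup.subset_normalClosure hr

lemma braid_rel {m : ℕ} {i j : Fin m} (h : (i : ℕ) + 1 = (j : ℕ)) :
    σ i * σ j * σ i = σ j * σ i * σ j := by
  have := braid_rel_mk (m := m) (Or.inl ⟨i, j, h, rfl⟩)
  have h2 : (QuotientGroup.mk (FreeGroup.of i * FreeGroup.of j * FreeGroup.of i *
      (FreeGroup.of j * FreeGroup.of i * FreeGroup.of j)⁻¹) : BraidGroup m)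
      = σ i * σ j * σ i * (σ j * σ i * σ j)⁻¹ := rfl
  rw [h2] at this
  exact mul_inv_eq_one.mp this

lemma braid_comm_rel {m : ℕ} {i j : Fin m} (h : (i : ℕ) + 2 ≤ (j : ℕ)) :
    σ i * σ j = σ j * σ i := by
  have := braid_rel_mk (m := m) (Or.inr ⟨i, j, h, rfl⟩)
  have h2 : (QuotientGroup.mk (FreeGroup.of i * FreeGroup.of j *
      (FreeGroup.of j * FreeGroup.of i)⁻¹) : BraidGroup m)
      = σ i * σ j * (σ j * σ i)⁻¹ := rfl
  rw [h2] at this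
  exact mul_inv_eq_one.mp this

/-- The endomorphism of the braid group sending each generator to its inverse. -/
def braidInv (m : ℕ) : BraidGroup m →* BraidGroup m :=
  PresentedGroup.toGroup (f := fun i => (σ i)⁻¹) (by
    rintro r (⟨i, j, hij, rfl⟩ | ⟨i, j, hij, rfl⟩) <;>
      simp only [map_mul, map_inv, FreeGroup.lift_apply_of, mul_inv_rev, inv_inv]
    · have hb' : σ j * (σ i * σ j) = σ i * (σ j * σ i) := by
        rw [← mul_assoc, ← braid_rel hij, mul_assoc]
      rw [hb']
      group
    · have hb' : σ i * σ j = σ j * σ i := braid_comm_rel hij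
      rw [hb']
      group)

@[simp] lemma braidInv_σ {m : ℕ} (i : Fin m) : braidInv m (σ i) = (σ i)⁻¹ :=
  PresentedGroup.toGroup.of _
/-! ### Construction of `Φ` and `Ψ` -/

/-- Negation on exponents, as an additive-monoid hom. -/
def negHom : (Fin 3 →₀ ℤ) →+ (Fin 3 →₀ ℤ) :=
  AddMonoidHom.mk' (fun x => -x) neg_add

/-- The ring automorphism of `LR` inverting all three variables. -/
def tau : LR →+* LR :=
  AddMonoidAlgebra.liftNCRingHom (Int.castRingHom LR)
    ((AddMonoidAlgebra.of ℤ (Fin 3 →₀ ℤ)).comp (AddMonoidHom.toMultiplicative negHom))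
    (fun x y => (Int.cast_commute x _))

lemma tau_single (x : Fin 3 →₀ ℤ) (n : ℤ) :
    tau (AddMonoidAlgebra.single x n) = AddMonoidAlgebra.single (-x) n := by
  have h0 : tau (AddMonoidAlgebra.single x n)
      = (AddMonoidAlgebra.liftNC ((Int.castRingHom LR) : ℤ →+ LR)
          ⇑((AddMonoidAlgebra.of ℤ (Fin 3 →₀ ℤ)).comp (AddMonoidHom.toMultiplicative negHom)))
        (AddMonoidAlgebra.single x n) := rfl
  rw [h0, AddMonoidAlgebra.liftNC_single]
  have h2 : ((AddMonoidAlgebra.of ℤ (Fin 3 →₀ ℤ)).comp (AddMonoidHom.toMultiplicative negHom))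
      (Multiplicative.ofAdd x) = AddMonoidAlgebra.single (-x) 1 := rfl
  erw [h2]
  have h1 : ((Int.castRingHom LR : ℤ →+ LR) : ℤ → LR) n = AddMonoidAlgebra.single 0 n := by
    simp [AddMonoidAlgebra.intCast_def]
  erw [h1]
  rw [AddMonoidAlgebra.single_mul_single]
  simp

lemma tau_va (i : Fin 3) : tau (va i) = vaInv i := by
  rw [va, tau_single]; rfl

lemma tau_vaInv (i : Fin 3) : tau (vaInv i) = va i := by
  rw [vaInv, tau_single, neg_neg]; rfl

lemma singleOne_commute {m : ℕ} (x y : LR) :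
    Commute ((MonoidAlgebra.singleOneRingHom.comp tau : LR →+* BA LR m) x)
      ((MonoidAlgebra.singleOneRingHom.comp tau : LR →+* BA LR m) y) :=
  MonoidAlgebra.single_commute_single (Commute.refl 1) (Commute.all _ _)

/-- A concrete `Φ`. -/
def Phi0 (m : ℕ) : BA LR m →+* BA LR m :=
  MonoidAlgebra.liftNCRingHom (MonoidAlgebra.singleOneRingHom.comp tau)
    ((MonoidAlgebra.of LR (BraidGroup m)).comp (braidInv m))
    (fun x y => by
      simp only [RingHom.coe_comp, Function.comp_apply, MonoidAlgebra.singleOneRingHom_apply]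
      exact (MonoidAlgebra.single_one_comm _ _))

lemma Phi0_single {m : ℕ} (b : BraidGroup m) (r : LR) :
    Phi0 m (MonoidAlgebra.single b r) = algC (tau r) * ι (braidInv m b) := by
  have h0 : Phi0 m (MonoidAlgebra.single b r)
      = (MonoidAlgebra.liftNC ((MonoidAlgebra.singleOneRingHom.comp tau : LR →+* BA LR m) : LR →+ BA LR m)
          ⇑((MonoidAlgebra.of LR (BraidGroup m)).comp (braidInv m)))
        (MonoidAlgebra.single b r) := rfl
  rw [h0, MonoidAlgebra.liftNC_single]
  simp only [RingHom.coe_comp, Function.comp_apply, MonoidHom.coe_comp,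
    MonoidAlgebra.singleOneRingHom_apply]
  rw [algC_def]
  rfl

lemma isPhi_Phi0 (m : ℕ) : IsPhi (Phi0 m) := by
  refine ⟨fun i => ?_, fun i => ?_, fun i => ?_⟩
  · rw [algC_def, Phi0_single, tau_va, map_one, ι_one, mul_one, algC_def]
  · rw [algC_def, Phi0_single, tau_vaInv, map_one, ι_one, mul_one, algC_def]
  · have : (ι (σ i) : BA LR m) = MonoidAlgebra.single (σ i) 1 := rfl
    rw [this, Phi0_single, map_one, algC_one, one_mul, braidInv_σ]

/-- A concrete `Ψ`. -/
def Psi0 (m : ℕ) : BA LR m →+* (BA LR m)ᵐᵒᵖ :=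
  MonoidAlgebra.liftNCRingHom
    ((MonoidAlgebra.singleOneRingHom.comp tau : LR →+* BA LR m).toOpposite singleOne_commute
      : LR →+* (BA LR m)ᵐᵒᵖ)
    ((MonoidHom.op (MonoidAlgebra.of LR (BraidGroup m))).comp
      (MulEquiv.inv' (BraidGroup m)).toMonoidHom)
    (fun x y => Commute.op (MonoidAlgebra.single_one_comm _ _))

lemma Psi0_single {m : ℕ} (b : BraidGroup m) (r : LR) :
    Psi0 m (MonoidAlgebra.single b r) = MulOpposite.op (ι b⁻¹ * algC (tau r)) := by
  have h0 : Psi0 m (MonoidAlgebra.single b r)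
      = (MonoidAlgebra.liftNC
          (((MonoidAlgebra.singleOneRingHom.comp tau : LR →+* BA LR m).toOpposite singleOne_commute
            : LR →+* (BA LR m)ᵐᵒᵖ) : LR →+ (BA LR m)ᵐᵒᵖ)
          ⇑((MonoidHom.op (MonoidAlgebra.of LR (BraidGroup m))).comp
              (MulEquiv.inv' (BraidGroup m)).toMonoidHom))
        (MonoidAlgebra.single b r) := rfl
  rw [h0, MonoidAlgebra.liftNC_single]
  have h3 : ((MonoidAlgebra.singleOneRingHom.comp tau : LR →+* BA LR m).toOpposite singleOne_commute
      : LR →+* (BA LR m)ᵐᵒᵖ) r = MulOpposite.op (MonoidAlgebra.single 1 (tau r)) := rfl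
  have h4 : ((MonoidHom.op (MonoidAlgebra.of LR (BraidGroup m))).comp
      (MulEquiv.inv' (BraidGroup m)).toMonoidHom) b
      = MulOpposite.op ((MonoidAlgebra.of LR (BraidGroup m)) b⁻¹) := rfl
  erw [h3, h4]
  rw [← MulOpposite.op_mul, algC_def]
  rfl

lemma isPsi_Psi0 (m : ℕ) : IsPsi (Psi0 m) := by
  refine ⟨fun i => ?_, fun i => ?_, fun g => ?_⟩
  · rw [algC_def, Psi0_single, tau_va, inv_one, ι_one, one_mul, algC_def]
  · rw [algC_def, Psi0_single, tau_vaInv, inv_one, ι_one, one_mul, algC_def]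
  · have : (ι g : BA LR m) = MonoidAlgebra.single g 1 := rfl
    rw [this, Psi0_single, map_one, algC_one, mul_one]
/-! ### The action of `Φ` and `Ψ` on `r₁` -/

lemma isPhi_inv {m : ℕ} {Φ : BA LR m →+* BA LR m} (h : IsPhi Φ) (i : Fin m) :
    Φ (ι ((σ i)⁻¹)) = ι (σ i) := by
  calc Φ (ι ((σ i)⁻¹)) = Φ (ι ((σ i)⁻¹)) * (ι ((σ i)⁻¹) * ι (σ i)) := by
        rw [ι_inv_mul, mul_one]
    _ = Φ (ι ((σ i)⁻¹)) * Φ (ι (σ i)) * ι (σ i) := by rw [h.2.2, mul_assoc]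
    _ = Φ (ι ((σ i)⁻¹ * σ i)) * ι (σ i) := by rw [← map_mul, ι_mul]
    _ = ι (σ i) := by rw [inv_mul_cancel, ι_one, map_one, one_mul]

lemma isPhi_la {m : ℕ} {Φ : BA LR m →+* BA LR m} (h : IsPhi Φ) (k : ℤ) :
    Φ (algC (la k)) = algC (la (-k)) := by
  have hp1 : Φ (algC (la 1)) = algC (la (-1)) := by
    have := h.1 0; rwa [va_eq_la, vaInv_eq_la] at this
  have hm1 : Φ (algC (la (-1))) = algC (la 1) := by
    have := h.2.1 0; rwa [va_eq_la, vaInv_eq_la] at this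
  induction k using Int.induction_on with
  | zero => rw [la_zero, algC_one, map_one, neg_zero, la_zero, algC_one]
  | succ n ih =>
    rw [show ((n : ℤ) + 1) = (n : ℤ) + 1 from rfl, ← la_mul, algC_mul, map_mul, ih, hp1,
      ← algC_mul, la_mul]
    congr 2
    ring
  | pred n ih =>
    rw [show (-(n : ℤ) - 1) = (-(n : ℤ)) + (-1) by ring, ← la_mul, algC_mul, map_mul, ih, hm1,
      ← algC_mul, la_mul]
    congr 2
    ring

lemma vaInv_sq : (vaInv 0 : LR) ^ 2 = la (-2) := by
  rw [vaInv_eq_la, la_pow]; norm_num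

set_option maxHeartbeats 1000000 in
lemma phi_r1 {m : ℕ} (Φ : BA LR (m+2) →+* BA LR (m+2)) (h : IsPhi Φ) :
    Φ (r1Elt m) = (vaInv 0 ^ 2) • r1Elt m := by
  have hσ := h.2.2
  have hσinv := isPhi_inv h
  have hla := isPhi_la h
  simp only [r1Elt, vaInv_sq, va_eq_la, vaInv_eq_la, la_pow, Nat.cast_ofNat,
    Int.reduceMul, Int.reduceNeg]
  simp only [smul_add, smul_sub, smul_sg, la_mul, mul_one, Int.reduceAdd]
  simp only [map_add, map_sub]
  simp only [sg_eq, ι_mul, map_mul, hσ, hσinv, hla, Int.reduceNeg, neg_neg,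
    la_zero, algC_one, one_mul, map_one]
  simp only [mul_assoc]
  abel

lemma isPsi_la {m : ℕ} {Ψ : BA LR m →+* (BA LR m)ᵐᵒᵖ} (h : IsPsi Ψ) (k : ℤ) :
    Ψ (algC (la k)) = MulOpposite.op (algC (la (-k))) := by
  have hp1 : Ψ (algC (la 1)) = MulOpposite.op (algC (la (-1))) := by
    have := h.1 0; rwa [va_eq_la, vaInv_eq_la] at this
  have hm1 : Ψ (algC (la (-1))) = MulOpposite.op (algC (la 1)) := by
    have := h.2.1 0; rwa [va_eq_la, vaInv_eq_la] at this
  induction k using Int.induction_on with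
  | zero => rw [la_zero, algC_one, map_one, neg_zero, la_zero, algC_one, MulOpposite.op_one]
  | succ n ih =>
    rw [← la_mul, algC_mul, map_mul, ih, hp1, ← MulOpposite.op_mul, ← algC_mul, la_mul]
    congr 3
    ring
  | pred n ih =>
    rw [show (-(n : ℤ) - 1) = (-(n : ℤ)) + (-1) by ring, ← la_mul, algC_mul, map_mul, ih, hm1,
      ← MulOpposite.op_mul, ← algC_mul, la_mul]
    congr 3
    ring

lemma isPsi_sg {m : ℕ} {Ψ : BA LR m →+* (BA LR m)ᵐᵒᵖ} (h : IsPsi Ψ) (g : BraidGroup m)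
    (k : ℤ) : Ψ (sg g (la k)) = MulOpposite.op (sg g⁻¹ (la (-k))) := by
  rw [sg_eq, map_mul, isPsi_la h, h.2.2 g, ← MulOpposite.op_mul, algC_comm, ← sg_eq]

lemma isPsi_sg_one {m : ℕ} {Ψ : BA LR m →+* (BA LR m)ᵐᵒᵖ} (h : IsPsi Ψ) (g : BraidGroup m) :
    Ψ (sg g (1 : LR)) = MulOpposite.op (sg g⁻¹ (1 : LR)) := by
  have := isPsi_sg h g 0
  rwa [neg_zero, la_zero] at this

set_option maxHeartbeats 1000000 in
lemma psi_r1 {m : ℕ} (Ψ : BA LR (m+2) →+* (BA LR (m+2))ᵐᵒᵖ) (h : IsPsi Ψ) :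
    (Ψ (r1Elt m)).unop = -((vaInv 0 ^ 2) • r1Elt m) := by
  have hsg := isPsi_sg h
  have hsg1 := isPsi_sg_one h
  simp only [r1Elt, vaInv_sq, va_eq_la, vaInv_eq_la, la_pow, Nat.cast_ofNat,
    Int.reduceMul, Int.reduceNeg]
  simp only [map_add, map_sub, hsg, hsg1, Int.reduceNeg]
  simp only [MulOpposite.unop_add, MulOpposite.unop_sub, MulOpposite.unop_op]
  simp only [smul_add, smul_sub, smul_sg, la_mul, mul_one, Int.reduceAdd]
  simp only [mul_inv_rev, inv_inv, mul_assoc]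
  simp only [la_zero, neg_neg]
  abel
/-! ### Flipping the cubic relation -/

section CubeFlip

variable {A : Type} [Ring A] {s s' x y z x' y' z' : A}

lemma cube_flip
    (hcomm : ∀ u ∈ ({s, s', x, y, z, x', y', z'} : Set A),
      ∀ v ∈ ({s, s', x, y, z, x', y', z'} : Set A), u * v = v * u)
    (hss' : s * s' = 1) (hx : x * x' = 1) (hy : y * y' = 1) (hz : z * z' = 1) :
    (s' - x') * (s' - y') * (s' - z') =
      -((x' * y' * z') * (s' * s' * s') * ((s - x) * (s - y) * (s - z))) := by
  let C := Subring.closure ({s, s', x, y, z, x', y', z'} : Set A)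
  letI : CommRing C := Subring.closureCommRingOfComm hcomm
  have hmem : ∀ u ∈ ({s, s', x, y, z, x', y', z'} : Set A), u ∈ C :=
    fun u hu => Subring.subset_closure hu
  let S : C := ⟨s, hmem s (by simp)⟩
  let S' : C := ⟨s', hmem s' (by simp)⟩
  let X : C := ⟨x, hmem x (by simp)⟩
  let Y : C := ⟨y, hmem y (by simp)⟩
  let Z : C := ⟨z, hmem z (by simp)⟩
  let X' : C := ⟨x', hmem x' (by simp)⟩
  let Y' : C := ⟨y', hmem y' (by simp)⟩
  let Z' : C := ⟨z', hmem z' (by simp)⟩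
  have h1 : S * S' = 1 := Subtype.ext hss'
  have h2 : X * X' = 1 := Subtype.ext hx
  have h3 : Y * Y' = 1 := Subtype.ext hy
  have h4 : Z * Z' = 1 := Subtype.ext hz
  have e1 : S' - X' = S' * X' * (X - S) := by linear_combination (-S') * h2 + X' * h1
  have e2 : S' - Y' = S' * Y' * (Y - S) := by linear_combination (-S') * h3 + Y' * h1
  have e3 : S' - Z' = S' * Z' * (Z - S) := by linear_combination (-S') * h4 + Z' * h1
  have key : (S' - X') * (S' - Y') * (S' - Z') =
      -((X' * Y' * Z') * (S' * S' * S') * ((S - X) * (S - Y) * (S - Z))) := by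
    rw [e1, e2, e3]; ring
  have := congrArg (Subtype.val) key
  push_cast at this
  exact this

lemma cube_flip'
    (hcomm : ∀ u ∈ ({s, s', x, y, z, x', y', z'} : Set A),
      ∀ v ∈ ({s, s', x, y, z, x', y', z'} : Set A), u * v = v * u)
    (hss' : s * s' = 1) (hx : x * x' = 1) (hy : y * y' = 1) (hz : z * z' = 1) :
    (s' - z') * ((s' - y') * (s' - x')) =
      -((x' * y' * z') * (s' * s' * s') * ((s - x) * (s - y) * (s - z))) := by
  let C := Subring.closure ({s, s', x, y, z, x', y', z'} : Set A)
  letI : CommRing C := Subring.closureCommRingOfComm hcomm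
  have hmem : ∀ u ∈ ({s, s', x, y, z, x', y', z'} : Set A), u ∈ C :=
    fun u hu => Subring.subset_closure hu
  let S : C := ⟨s, hmem s (by simp)⟩
  let S' : C := ⟨s', hmem s' (by simp)⟩
  let X : C := ⟨x, hmem x (by simp)⟩
  let Y : C := ⟨y, hmem y (by simp)⟩
  let Z : C := ⟨z, hmem z (by simp)⟩
  let X' : C := ⟨x', hmem x' (by simp)⟩
  let Y' : C := ⟨y', hmem y' (by simp)⟩
  let Z' : C := ⟨z', hmem z' (by simp)⟩
  have h1 : S * S' = 1 := Subtype.ext hss'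
  have h2 : X * X' = 1 := Subtype.ext hx
  have h3 : Y * Y' = 1 := Subtype.ext hy
  have h4 : Z * Z' = 1 := Subtype.ext hz
  have e1 : S' - X' = S' * X' * (X - S) := by linear_combination (-S') * h2 + X' * h1
  have e2 : S' - Y' = S' * Y' * (Y - S) := by linear_combination (-S') * h3 + Y' * h1
  have e3 : S' - Z' = S' * Z' * (Z - S) := by linear_combination (-S') * h4 + Z' * h1
  have key : (S' - Z') * ((S' - Y') * (S' - X')) =
      -((X' * Y' * Z') * (S' * S' * S') * ((S - X) * (S - Y) * (S - Z))) := by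
    rw [e1, e2, e3]; ring
  have := congrArg (Subtype.val) key
  push_cast at this
  exact this

end CubeFlip
/-! ### Killing the ideals -/

lemma kills {A B : Type} [Ring A] [Ring B] (f : A →+* B) (g : A) (hg : f g = 0) :
    ∀ x y, idRel (TwoSidedIdeal.span {g}) x y → f x = f y := by
  intro x y hxy
  have hmem : x - y ∈ TwoSidedIdeal.ker f :=
    TwoSidedIdeal.mem_span_iff.mp hxy _ (by
      intro u hu
      rw [Set.mem_singleton_iff] at hu
      subst hu
      rw [SetLike.mem_coe, TwoSidedIdeal.mem_ker]
      exact hg)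
  rw [TwoSidedIdeal.mem_ker, map_sub, sub_eq_zero] at hmem
  exact hmem

/-- The generator of the cubic ideal, on `m+2` strands. -/
abbrev cubicE (m : ℕ) : BA LR (m+2) := cubicElt LR (va 0) (va 1) (va 2) (m+1)

lemma cubicE_def (m : ℕ) : cubicE m
    = (ι (σ 0) - algC (va 0)) * (ι (σ 0) - algC (va 1)) * (ι (σ 0) - algC (va 2)) := rfl

lemma hMk_cubic (m : ℕ) : hMk (m+1) (cubicE m) = 0 := by
  have h := RingQuot.mkAlgHom_rel (S := LR)
    (s := idRel (cubicIdeal LR (va 0) (va 1) (va 2) (m+1)))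
    (x := cubicE m) (y := 0) (by
      show cubicE m - 0 ∈ _
      rw [sub_zero]
      exact TwoSidedIdeal.subset_span rfl)
  rw [hMk, heckeMk, h, map_zero]

lemma qMk_hMk (m : ℕ) (u : BA LR (m+2)) :
    qMk m u = RingQuot.mkAlgHom LR (idRel (QIdeal m)) (hMk (m+1) u) := rfl

lemma qMk_cubic (m : ℕ) : qMk m (cubicE m) = 0 := by
  rw [qMk_hMk, hMk_cubic, map_zero]

lemma qMk_r1 (m : ℕ) : qMk m (r1Elt m) = 0 := by
  have h := RingQuot.mkAlgHom_rel (S := LR) (s := idRel (QIdeal m))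
    (x := hMk (m+1) (r1Elt m)) (y := 0) (by
      show hMk (m+1) (r1Elt m) - 0 ∈ QIdeal m
      rw [sub_zero]
      exact TwoSidedIdeal.subset_span rfl)
  rw [qMk_hMk, h, map_zero]

lemma qMk_surjective (m : ℕ) : Function.Surjective (qMk m) := by
  have h1 : Function.Surjective (RingQuot.mkAlgHom LR (idRel (QIdeal m))) :=
    RingQuot.mkAlgHom_surjective _ _
  have h2 : Function.Surjective (hMk (m+1)) := RingQuot.mkAlgHom_surjective _ _
  exact h1.comp h2

/-! ### The images of the cubic generator under `Φ` and `Ψ` -/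

lemma braid_comm_set (m : ℕ) :
    ∀ u ∈ ({ι (σ 0), ι ((σ 0)⁻¹), algC (va 0), algC (va 1), algC (va 2),
        algC (vaInv 0), algC (vaInv 1), algC (vaInv 2)} : Set (BA LR (m+2))),
      ∀ v ∈ ({ι (σ 0), ι ((σ 0)⁻¹), algC (va 0), algC (va 1), algC (va 2),
        algC (vaInv 0), algC (vaInv 1), algC (vaInv 2)} : Set (BA LR (m+2))),
        u * v = v * u := by
  intro u hu v hv
  simp only [Set.mem_insert_iff, Set.mem_singleton_iff] at hu hv
  rcases hu with rfl | rfl | rfl | rfl | rfl | rfl | rfl | rfl <;>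
    rcases hv with rfl | rfl | rfl | rfl | rfl | rfl | rfl | rfl <;>
    first
      | with_reducible rfl
      | (rw [ι_mul_inv, ι_inv_mul])
      | (rw [ι_inv_mul, ι_mul_inv])
      | (with_reducible exact (algC_comm _ _))
      | (with_reducible exact (algC_comm _ _).symm)

lemma algC_va_mul_vaInv {m : ℕ} (i : Fin 3) :
    (algC (va i) : BA LR m) * algC (vaInv i) = 1 := by
  rw [← algC_mul]
  have : va i * vaInv i = 1 := by
    rw [va, vaInv, AddMonoidAlgebra.single_mul_single]
    simp [AddMonoidAlgebra.one_def]
  rw [this, algC_one]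

lemma phi_cubic {m : ℕ} {Φ : BA LR (m+2) →+* BA LR (m+2)} (hΦ : IsPhi Φ) :
    Φ (cubicE m) =
      -((algC (vaInv 0) * algC (vaInv 1) * algC (vaInv 2))
        * (ι ((σ 0)⁻¹) * ι ((σ 0)⁻¹) * ι ((σ 0)⁻¹)) * cubicE m) := by
  rw [cubicE_def, map_mul, map_mul, map_sub, map_sub, map_sub, hΦ.2.2, hΦ.1 0, hΦ.1 1, hΦ.1 2]
  exact cube_flip (braid_comm_set m) (ι_mul_inv _) (algC_va_mul_vaInv 0)
    (algC_va_mul_vaInv 1) (algC_va_mul_vaInv 2)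

lemma psi_cubic {m : ℕ} {Ψ : BA LR (m+2) →+* (BA LR (m+2))ᵐᵒᵖ} (hΨ : IsPsi Ψ) :
    (Ψ (cubicE m)).unop =
      -((algC (vaInv 0) * algC (vaInv 1) * algC (vaInv 2))
        * (ι ((σ 0)⁻¹) * ι ((σ 0)⁻¹) * ι ((σ 0)⁻¹)) * cubicE m) := by
  rw [cubicE_def, map_mul, map_mul, map_sub, map_sub, map_sub, hΨ.2.2, hΨ.1 0, hΨ.1 1, hΨ.1 2]
  simp only [← MulOpposite.op_sub, ← MulOpposite.op_mul, MulOpposite.unop_op]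
  exact cube_flip' (braid_comm_set m) (ι_mul_inv _) (algC_va_mul_vaInv 0)
    (algC_va_mul_vaInv 1) (algC_va_mul_vaInv 2)
/-! ### Descending `Φ` and `Ψ` to `Q_n` -/

section Desc

variable {m : ℕ}

lemma qMk_phi_cubic {Φ : BA LR (m+2) →+* BA LR (m+2)} (hΦ : IsPhi Φ) :
    qMk m (Φ (cubicE m)) = 0 := by
  rw [phi_cubic hΦ, map_neg, map_mul, qMk_cubic, mul_zero, neg_zero]

/-- First stage of the descent of `Φ`: to the cubic Hecke algebra. -/
def descPhi1 (Φ : BA LR (m+2) →+* BA LR (m+2)) (hΦ : IsPhi Φ) : HLR (m+1) →+* QAlg m :=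
  RingQuot.lift ⟨((qMk m : BA LR (m+2) →ₐ[LR] QAlg m) : BA LR (m+2) →+* QAlg m).comp Φ,
    kills _ (cubicE m) (by
      rw [RingHom.comp_apply]
      exact qMk_phi_cubic hΦ)⟩

lemma hMk_eq_mkRingHom (u : BA LR (m+2)) :
    hMk (m+1) u = RingQuot.mkRingHom (idRel (cubicIdeal LR (va 0) (va 1) (va 2) (m+1))) u := by
  rw [hMk, heckeMk, ← RingQuot.mkAlgHom_coe LR]
  rfl

lemma descPhi1_hMk {Φ : BA LR (m+2) →+* BA LR (m+2)} (hΦ : IsPhi Φ) (u : BA LR (m+2)) :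
    descPhi1 Φ hΦ (hMk (m+1) u) = qMk m (Φ u) := by
  rw [hMk_eq_mkRingHom, descPhi1]
  exact RingQuot.lift_mkRingHom_apply _ _ _

/-- The descent of `Φ` to `Q_n`, as a ring homomorphism. -/
def descPhi (Φ : BA LR (m+2) →+* BA LR (m+2)) (hΦ : IsPhi Φ) : QAlg m →+* QAlg m :=
  RingQuot.lift ⟨descPhi1 Φ hΦ, kills _ (hMk (m+1) (r1Elt m)) (by
    rw [descPhi1_hMk hΦ, phi_r1 Φ hΦ, map_smul, qMk_r1, smul_zero])⟩

lemma qMk_eq_mkRingHom (u : BA LR (m+2)) :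
    qMk m u = RingQuot.mkRingHom (idRel (QIdeal m)) (hMk (m+1) u) := by
  rw [qMk_hMk, ← RingQuot.mkAlgHom_coe LR]
  rfl

lemma descPhi_qMk {Φ : BA LR (m+2) →+* BA LR (m+2)} (hΦ : IsPhi Φ) (u : BA LR (m+2)) :
    descPhi Φ hΦ (qMk m u) = qMk m (Φ u) := by
  rw [qMk_eq_mkRingHom, descPhi]
  exact (RingQuot.lift_mkRingHom_apply _ _ _).trans (descPhi1_hMk hΦ u)

lemma qMk_psi_cubic {Ψ : BA LR (m+2) →+* (BA LR (m+2))ᵐᵒᵖ} (hΨ : IsPsi Ψ) :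
    qMk m ((Ψ (cubicE m)).unop) = 0 := by
  rw [psi_cubic hΨ, map_neg, map_mul, qMk_cubic, mul_zero, neg_zero]

/-- First stage of the descent of `Ψ`. -/
def descPsi1 (Ψ : BA LR (m+2) →+* (BA LR (m+2))ᵐᵒᵖ) (hΨ : IsPsi Ψ) :
    HLR (m+1) →+* (QAlg m)ᵐᵒᵖ :=
  RingQuot.lift ⟨(RingHom.op ((qMk m : BA LR (m+2) →ₐ[LR] QAlg m)
      : BA LR (m+2) →+* QAlg m)).comp Ψ,
    kills _ (cubicE m) (by
      have : ((RingHom.op ((qMk m : BA LR (m+2) →ₐ[LR] QAlg m)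
          : BA LR (m+2) →+* QAlg m)).comp Ψ) (cubicE m)
          = MulOpposite.op (qMk m ((Ψ (cubicE m)).unop)) := rfl
      rw [this, qMk_psi_cubic hΨ, MulOpposite.op_zero])⟩

lemma descPsi1_hMk {Ψ : BA LR (m+2) →+* (BA LR (m+2))ᵐᵒᵖ} (hΨ : IsPsi Ψ) (u : BA LR (m+2)) :
    descPsi1 Ψ hΨ (hMk (m+1) u) = MulOpposite.op (qMk m ((Ψ u).unop)) := by
  rw [hMk_eq_mkRingHom, descPsi1]
  exact RingQuot.lift_mkRingHom_apply _ _ _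

/-- The descent of `Ψ` to `Q_n`, as a ring homomorphism into the opposite algebra. -/
def descPsi (Ψ : BA LR (m+2) →+* (BA LR (m+2))ᵐᵒᵖ) (hΨ : IsPsi Ψ) :
    QAlg m →+* (QAlg m)ᵐᵒᵖ :=
  RingQuot.lift ⟨descPsi1 Ψ hΨ, kills _ (hMk (m+1) (r1Elt m)) (by
    rw [descPsi1_hMk hΨ, psi_r1 Ψ hΨ, map_neg, map_smul, qMk_r1, smul_zero, neg_zero,
      MulOpposite.op_zero])⟩

lemma descPsi_qMk {Ψ : BA LR (m+2) →+* (BA LR (m+2))ᵐᵒᵖ} (hΨ : IsPsi Ψ) (u : BA LR (m+2)) :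
    descPsi Ψ hΨ (qMk m u) = MulOpposite.op (qMk m ((Ψ u).unop)) := by
  rw [qMk_eq_mkRingHom, descPsi]
  exact (RingQuot.lift_mkRingHom_apply _ _ _).trans (descPsi1_hMk hΨ u)

end Desc

/-! ### Involutivity and commutation -/

/-- The double-opposite ring equivalence. -/
def unop2 (A : Type) [NonAssocSemiring A] : Aᵐᵒᵖᵐᵒᵖ ≃+* A where
  toFun a := a.unop.unop
  invFun a := MulOpposite.op (MulOpposite.op a)
  left_inv a := rfl
  right_inv a := rfl
  map_mul' a b := rfl
  map_add' a b := rfl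

lemma isPhi_invol {m : ℕ} {Φ : BA LR m →+* BA LR m} (hΦ : IsPhi Φ) :
    Φ.comp Φ = RingHom.id (BA LR m) := by
  refine BA_hom_ext _ _ (fun i => ?_) (fun i => ?_) (fun i => ?_) <;>
    simp only [RingHom.comp_apply, RingHom.id_apply]
  · rw [hΦ.1 i, hΦ.2.1 i]
  · rw [hΦ.2.1 i, hΦ.1 i]
  · rw [hΦ.2.2 i, isPhi_inv hΦ i]

/-- `Ψ` composed with itself (through the opposite) is a ring endomorphism. -/
def psiSq {m : ℕ} (Ψ : BA LR m →+* (BA LR m)ᵐᵒᵖ) : BA LR m →+* BA LR m :=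
  ((unop2 (BA LR m)).toRingHom).comp ((RingHom.op Ψ).comp Ψ)

lemma psiSq_apply {m : ℕ} (Ψ : BA LR m →+* (BA LR m)ᵐᵒᵖ) (u : BA LR m) :
    psiSq Ψ u = (Ψ ((Ψ u).unop)).unop := rfl

lemma isPsi_invol {m : ℕ} {Ψ : BA LR m →+* (BA LR m)ᵐᵒᵖ} (hΨ : IsPsi Ψ) :
    psiSq Ψ = RingHom.id (BA LR m) := by
  refine BA_hom_ext _ _ (fun i => ?_) (fun i => ?_) (fun i => ?_) <;>
    simp only [psiSq_apply, RingHom.id_apply]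
  · rw [hΨ.1 i, MulOpposite.unop_op, hΨ.2.1 i, MulOpposite.unop_op]
  · rw [hΨ.2.1 i, MulOpposite.unop_op, hΨ.1 i, MulOpposite.unop_op]
  · rw [hΨ.2.2 (σ i), MulOpposite.unop_op, hΨ.2.2 ((σ i)⁻¹), MulOpposite.unop_op, inv_inv]

lemma phi_psi_comm {m : ℕ} {Φ : BA LR m →+* BA LR m} {Ψ : BA LR m →+* (BA LR m)ᵐᵒᵖ}
    (hΦ : IsPhi Φ) (hΨ : IsPsi Ψ) :
    Ψ.comp Φ = (RingHom.op Φ).comp Ψ := by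
  have hop : ∀ u : BA LR m, (RingHom.op Φ) (MulOpposite.op u) = MulOpposite.op (Φ u) :=
    fun u => rfl
  refine BA_hom_ext _ _ (fun i => ?_) (fun i => ?_) (fun i => ?_) <;>
    simp only [RingHom.comp_apply]
  · rw [hΦ.1 i, hΨ.2.1 i, hΨ.1 i, hop, hΦ.2.1 i]
  · rw [hΦ.2.1 i, hΨ.1 i, hΨ.2.1 i, hop, hΦ.1 i]
  · rw [hΦ.2.2 i, hΨ.2.2 ((σ i)⁻¹), inv_inv, hΨ.2.2 (σ i), hop, isPhi_inv hΦ i]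

lemma psi_phi_algC {m : ℕ} {Φ : BA LR m →+* BA LR m} {Ψ : BA LR m →+* (BA LR m)ᵐᵒᵖ}
    (hΦ : IsPhi Φ) (hΨ : IsPsi Ψ) (r : LR) :
    Ψ (Φ (algC r)) = MulOpposite.op (algC r) := by
  have h := LR_hom_ext ((Ψ.comp Φ).comp (algebraMap LR (BA LR m)))
    ((algebraMap LR (BA LR m)).toOpposite (fun a b => algC_comm b (algC a)))
    (fun i => by
      simp only [RingHom.comp_apply, RingHom.toOpposite_apply, Function.comp_apply]
      rw [show (algebraMap LR (BA LR m)) (va i) = algC (va i) from rfl, hΦ.1 i, hΨ.2.1 i]; rfl)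
    (fun i => by
      simp only [RingHom.comp_apply, RingHom.toOpposite_apply, Function.comp_apply]
      rw [show (algebraMap LR (BA LR m)) (vaInv i) = algC (vaInv i) from rfl, hΦ.2.1 i,
        hΨ.1 i]; rfl)
  exact DFunLike.congr_fun h r

/-- `Φ` and `Ψ` exist; in `H₃` one has `Φ(r₁) = a⁻² r₁` and
`Ψ(r₁) = -a⁻² r₁`; consequently, for every `n ≥ 3` (here `n = m+3`), `Φ` induces a
ℤ-algebra automorphism `φ` of `Qₙ`, `Ψ` induces a ℤ-algebra anti-automorphism `ψ` of `Qₙ`,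
and `φ∘ψ = ψ∘φ` is an `R`-algebra anti-automorphism of `Qₙ` fixing each `sᵢ`. -/
theorem statement3 :
    (∃ Φ : BA LR 2 →+* BA LR 2, IsPhi Φ) ∧
    (∃ Ψ : BA LR 2 →+* (BA LR 2)ᵐᵒᵖ, IsPsi Ψ) ∧
    (∀ Φ : BA LR 2 →+* BA LR 2, IsPhi Φ →
      hMk 1 (Φ (r1Elt 0)) = hMk 1 ((vaInv 0 ^ 2) • r1Elt 0)) ∧
    (∀ Ψ : BA LR 2 →+* (BA LR 2)ᵐᵒᵖ, IsPsi Ψ →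
      hMk 1 ((Ψ (r1Elt 0)).unop) = hMk 1 (-((vaInv 0 ^ 2) • r1Elt 0))) ∧
    (∀ m : ℕ,
      (∀ Φ : BA LR (m+2) →+* BA LR (m+2), IsPhi Φ →
        ∃ φ : QAlg m ≃+* QAlg m, ∀ x : BA LR (m+2), φ (qMk m x) = qMk m (Φ x)) ∧
      (∀ Ψ : BA LR (m+2) →+* (BA LR (m+2))ᵐᵒᵖ, IsPsi Ψ →
        ∃ ψ : QAlg m ≃+* (QAlg m)ᵐᵒᵖ, ∀ x : BA LR (m+2),
          ψ (qMk m x) = MulOpposite.op (qMk m ((Ψ x).unop))) ∧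
      (∀ (φ : QAlg m ≃+* QAlg m) (ψ : QAlg m ≃+* (QAlg m)ᵐᵒᵖ),
        (∃ Φ : BA LR (m+2) →+* BA LR (m+2), IsPhi Φ ∧
          ∀ x : BA LR (m+2), φ (qMk m x) = qMk m (Φ x)) →
        (∃ Ψ : BA LR (m+2) →+* (BA LR (m+2))ᵐᵒᵖ, IsPsi Ψ ∧
          ∀ x : BA LR (m+2), ψ (qMk m x) = MulOpposite.op (qMk m ((Ψ x).unop))) →
        (∀ x : QAlg m, MulOpposite.op (φ (ψ x).unop) = ψ (φ x)) ∧
        (∀ r : LR, ψ (φ (algebraMap LR (QAlg m) r)) =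
          MulOpposite.op (algebraMap LR (QAlg m) r)) ∧
        (∀ i : Fin (m+2), ψ (φ (qg (σ i))) = MulOpposite.op (qg (σ i))))) := by
  refine ⟨⟨Phi0 2, isPhi_Phi0 2⟩, ⟨Psi0 2, isPsi_Psi0 2⟩,
    fun Φ hΦ => congrArg (hMk 1) (phi_r1 (m := 0) Φ hΦ),
    fun Ψ hΨ => congrArg (hMk 1) (psi_r1 (m := 0) Ψ hΨ),
    fun m => ⟨?_, ?_, ?_⟩⟩
  · -- the automorphism φ
    intro Φ hΦ
    refine ⟨RingEquiv.ofRingHom (descPhi Φ hΦ) (descPhi Φ hΦ) ?_ ?_,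
      fun x => descPhi_qMk hΦ x⟩ <;>
    · refine RingHom.ext fun q => ?_
      obtain ⟨u, rfl⟩ := qMk_surjective m q
      show descPhi Φ hΦ (descPhi Φ hΦ (qMk m u)) = qMk m u
      rw [descPhi_qMk hΦ, descPhi_qMk hΦ]
      exact congrArg (qMk m) (DFunLike.congr_fun (isPhi_invol hΦ) u)
  · -- the anti-automorphism ψ
    intro Ψ hΨ
    have key : ∀ u : BA LR (m+2),
        (((unop2 (QAlg m)).toRingHom).comp (RingHom.op (descPsi Ψ hΨ)))
          (descPsi Ψ hΨ (qMk m u)) = qMk m (psiSq Ψ u) := by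
      intro u
      rw [descPsi_qMk hΨ]
      have h1 : (((unop2 (QAlg m)).toRingHom).comp (RingHom.op (descPsi Ψ hΨ)))
          (MulOpposite.op (qMk m ((Ψ u).unop)))
          = (descPsi Ψ hΨ (qMk m ((Ψ u).unop))).unop := rfl
      rw [h1, descPsi_qMk hΨ, MulOpposite.unop_op, psiSq_apply]
    refine ⟨RingEquiv.ofRingHom (descPsi Ψ hΨ)
        (((unop2 (QAlg m)).toRingHom).comp (RingHom.op (descPsi Ψ hΨ))) ?_ ?_,
      fun x => descPsi_qMk hΨ x⟩
    swap
    · refine RingHom.ext fun q => ?_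
      obtain ⟨u, rfl⟩ := qMk_surjective m q
      show (((unop2 (QAlg m)).toRingHom).comp (RingHom.op (descPsi Ψ hΨ)))
        (descPsi Ψ hΨ (qMk m u)) = qMk m u
      rw [key u]
      exact congrArg (qMk m) (DFunLike.congr_fun (isPsi_invol hΨ) u)
    · refine RingHom.ext fun w => ?_
      obtain ⟨u, hu⟩ := qMk_surjective m w.unop
      have hw : w = MulOpposite.op (qMk m u) := by rw [hu, MulOpposite.op_unop]
      subst hw
      show descPsi Ψ hΨ ((((unop2 (QAlg m)).toRingHom).comp (RingHom.op (descPsi Ψ hΨ)))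
        (MulOpposite.op (qMk m u))) = MulOpposite.op (qMk m u)
      have h1 : (((unop2 (QAlg m)).toRingHom).comp (RingHom.op (descPsi Ψ hΨ)))
          (MulOpposite.op (qMk m u)) = (descPsi Ψ hΨ (qMk m u)).unop := rfl
      rw [h1, descPsi_qMk hΨ, MulOpposite.unop_op, descPsi_qMk hΨ]
      have h2 : (Ψ ((Ψ u).unop)).unop = psiSq Ψ u := rfl
      rw [h2, DFunLike.congr_fun (isPsi_invol hΨ) u]
      rfl
  · -- the composite
    rintro φ ψ ⟨Φ, hΦ, hφ⟩ ⟨Ψ, hΨ, hψ⟩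
    have hcomm := phi_psi_comm hΦ hΨ
    refine ⟨fun x => ?_, fun r => ?_, fun i => ?_⟩
    · obtain ⟨u, rfl⟩ := qMk_surjective m x
      rw [hψ u, MulOpposite.unop_op, hφ, hφ u, hψ (Φ u)]
      have h1 := DFunLike.congr_fun hcomm u
      rw [RingHom.comp_apply, RingHom.comp_apply] at h1
      have h2 : (RingHom.op Φ) (Ψ u) = MulOpposite.op (Φ ((Ψ u).unop)) := rfl
      rw [h2] at h1
      rw [congrArg MulOpposite.unop h1, MulOpposite.unop_op]
    · rw [show algebraMap LR (QAlg m) r = qMk m (algC r) from ((qMk m).commutes r).symm,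
        hφ, hψ, psi_phi_algC hΦ hΨ r, MulOpposite.unop_op]
    · show ψ (φ (qMk m (ι (σ i)))) = MulOpposite.op (qMk m (ι (σ i)))
      rw [hφ, hΦ.2.2 i, hψ, hΨ.2.2 ((σ i)⁻¹), inv_inv, MulOpposite.unop_op]

end Cubic
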